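/- Let T > 0 and let e : ℝ → ℝ be continuous and nonnegative on [0,T] and twice differentiable on (0,T), satisfying e'(t) ≤ 0 and e(t)·e''(t) ≥ (e'(t))² for every t ∈ (0,T). If e(T) = 0, then e(t) = 0 for every t ∈ [0,T]; moreover e is nonincreasing on [0,T], i.e. e(t₂) ≤ e(t₁) whenever 0 ≤ t₁ < t₂ ≤ T. -/

import Mathlib

open Topology Filter

/-- Abstract form of Lemma 3.1: a continuous nonnegative energy on `[0,T]`,
twice differentiable on `(0,T)` with `e' ≤ 0` and `e·e'' ≥ (e')²`, is
nonincreasing, and vanishes identically on `[0,T]` whenever `e(T) = 0`. -/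
theorem stmt_1 (T : ℝ) (hT : 0 < T) (e e' e'' : ℝ → ℝ)
    (hcont : ContinuousOn e (Set.Icc 0 T))
    (hnonneg : ∀ t ∈ Set.Icc 0 T, 0 ≤ e t)
    (hd1 : ∀ t ∈ Set.Ioo 0 T, HasDerivAt e (e' t) t)
    (hd2 : ∀ t ∈ Set.Ioo 0 T, HasDerivAt e' (e'' t) t)
    (hdec : ∀ t ∈ Set.Ioo 0 T, e' t ≤ 0)
    (hineq : ∀ t ∈ Set.Ioo 0 T, (e' t) ^ 2 ≤ e t * e'' t) :
    (e T = 0 → ∀ t ∈ Set.Icc 0 T, e t = 0) ∧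
      (∀ t₁ t₂ : ℝ, 0 ≤ t₁ → t₁ < t₂ → t₂ ≤ T → e t₂ ≤ e t₁) := by
  have hintIcc : interior (Set.Icc (0:ℝ) T) = Set.Ioo 0 T := interior_Icc
  -- antitone
  have hanti : AntitoneOn e (Set.Icc 0 T) := by
    apply antitoneOn_of_deriv_nonpos (convex_Icc 0 T) hcont
    · rw [hintIcc]
      exact fun x hx => (hd1 x hx).differentiableAt.differentiableWithinAt
    · rw [hintIcc]
      intro x hx
      rw [(hd1 x hx).deriv]
      exact hdec x hx
  refine ⟨?_, fun t₁ t₂ h1 h2 h3 => hanti ⟨h1, le_of_lt (lt_of_lt_of_le h2 h3)⟩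
    ⟨le_trans h1 h2.le, h3⟩ h2.le⟩
  intro heT t ht
  by_contra hne
  have hpos_t : 0 < e t := lt_of_le_of_ne (hnonneg t ht) (Ne.symm hne)
  -- get a point t₀ in the open interval with e t₀ > 0
  obtain ⟨t₀, ht₀, hpos₀⟩ : ∃ t₀ ∈ Set.Ioo (0:ℝ) T, 0 < e t₀ := by
    rcases eq_or_lt_of_le ht.1 with h0 | h0
    · -- t = 0, use continuity
      have hc0 : ContinuousWithinAt e (Set.Icc 0 T) 0 := hcont 0 (by constructor <;> simp [hT.le])
      have hev : ∀ᶠ s in 𝓝[Set.Icc 0 T] 0, 0 < e s := by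
        have := hc0.eventually_const_lt (by rwa [← h0] at hpos_t)
        simpa using this
      have hev2 : ∀ᶠ s in 𝓝[Set.Ioo 0 T] 0, 0 < e s :=
        hev.filter_mono (nhdsWithin_mono _ Set.Ioo_subset_Icc_self)
      have hev3 : ∀ᶠ s in 𝓝[Set.Ioo 0 T] 0, s ∈ Set.Ioo (0:ℝ) T ∧ 0 < e s :=
        (eventually_mem_nhdsWithin).and hev2
      haveI := left_nhdsWithin_Ioo_neBot hT
      obtain ⟨s, hs1, hs2⟩ := hev3.exists
      exact ⟨s, hs1, hs2⟩
    · rcases eq_or_lt_of_le ht.2 with hTt | hTt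
      · exact absurd (hTt ▸ heT) hne
      · exact ⟨t, ⟨h0, hTt⟩, hpos_t⟩
  -- first zero after t₀
  set Z : Set ℝ := {s | s ∈ Set.Icc t₀ T ∧ e s = 0} with hZ
  have hZclosed : IsClosed Z := by
    have : Z = Set.Icc t₀ T ∩ e ⁻¹' {0} := by
      ext s
      simp [hZ, Set.mem_setOf_eq, Set.mem_inter_iff, Set.mem_preimage, Set.mem_singleton_iff]
    rw [this]
    exact (hcont.mono (Set.Icc_subset_Icc ht₀.1.le le_rfl)).preimage_isClosed_of_isClosed
      isClosed_Icc isClosed_singleton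
  have hZne : Z.Nonempty := ⟨T, ⟨ht₀.2.le, le_rfl⟩, heT⟩
  have hZbdd : BddBelow Z := ⟨t₀, fun s hs => hs.1.1⟩
  set t₁ := sInf Z with ht₁def
  have ht₁Z : t₁ ∈ Z := hZclosed.csInf_mem hZne hZbdd
  have ht₁le : t₀ ≤ t₁ := ht₁Z.1.1
  have ht₁T : t₁ ≤ T := ht₁Z.1.2
  have ht₀t₁ : t₀ < t₁ := by
    rcases eq_or_lt_of_le ht₁le with h | h
    · exact absurd (h ▸ ht₁Z.2) (ne_of_gt hpos₀)
    · exact h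
  have hposIco : ∀ s ∈ Set.Ico t₀ t₁, 0 < e s := by
    intro s hs
    have hsIcc : s ∈ Set.Icc (0:ℝ) T := ⟨le_trans ht₀.1.le hs.1, le_trans hs.2.le ht₁T⟩
    rcases lt_or_eq_of_le (hnonneg s hsIcc) with h | h
    · exact h
    · exact absurd hs.2 (not_lt.mpr (csInf_le hZbdd ⟨⟨hs.1, hsIcc.2⟩, h.symm⟩))
  have hsubIoo : Set.Ioo t₀ t₁ ⊆ Set.Ioo 0 T := fun s hs =>
    ⟨lt_trans ht₀.1 hs.1, lt_of_lt_of_le hs.2 ht₁T⟩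
  -- f = log ∘ e, g = e'/e
  set f : ℝ → ℝ := fun s => Real.log (e s) with hf
  set g : ℝ → ℝ := fun s => e' s / e s with hg
  have hfderiv : ∀ s ∈ Set.Ioo t₀ t₁, HasDerivAt f (g s) s := by
    intro s hs
    have hes : e s ≠ 0 := ne_of_gt (hposIco s ⟨hs.1.le, hs.2⟩)
    have := (Real.hasDerivAt_log hes).comp s (hd1 s (hsubIoo hs))
    convert this using 1
    · rfl
    · rfl
    · rfl
    · simp [hg, div_eq_inv_mul]
  have hgderiv : ∀ s ∈ Set.Ioo t₀ t₁,
      HasDerivAt g ((e'' s * e s - e' s * e' s) / (e s)^2) s := by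
    intro s hs
    have hes : e s ≠ 0 := ne_of_gt (hposIco s ⟨hs.1.le, hs.2⟩)
    exact (hd2 s (hsubIoo hs)).div (hd1 s (hsubIoo hs)) hes
  have hgmono : MonotoneOn g (Set.Ioo t₀ t₁) := by
    apply monotoneOn_of_deriv_nonneg (convex_Ioo t₀ t₁)
    · exact fun s hs => (hgderiv s hs).continuousAt.continuousWithinAt
    · rw [interior_Ioo]
      exact fun s hs => (hgderiv s hs).differentiableAt.differentiableWithinAt
    · rw [interior_Ioo]
      intro s hs
      rw [(hgderiv s hs).deriv]
      apply div_nonneg _ (sq_nonneg _)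
      have := hineq s (hsubIoo hs)
      nlinarith [this]
  -- midpoint
  set a := (t₀ + t₁) / 2 with ha
  have haIoo : a ∈ Set.Ioo t₀ t₁ := ⟨by linarith, by linarith⟩
  set m := g a with hm
  have hmle : m ≤ 0 := by
    have hes : 0 < e a := hposIco a ⟨haIoo.1.le, haIoo.2⟩
    exact div_nonpos_of_nonpos_of_nonneg (hdec a (hsubIoo haIoo)) hes.le
  -- h = f - m * id is monotone on Ico a t₁
  set h : ℝ → ℝ := fun s => f s - m * s with hh
  have hIcosub : Set.Ico a t₁ ⊆ Set.Ioo t₀ t₁ := fun s hs => ⟨lt_of_lt_of_le haIoo.1 hs.1, hs.2⟩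
  have hhderiv : ∀ s ∈ Set.Ico a t₁, HasDerivAt h (g s - m) s := by
    intro s hs
    convert (hfderiv s (hIcosub hs)).sub ((hasDerivAt_id s).const_mul m) using 1
    · rfl
    · rfl
    · rfl
    · simp
  have hhmono : MonotoneOn h (Set.Ico a t₁) := by
    apply monotoneOn_of_deriv_nonneg (convex_Ico a t₁)
    · exact fun s hs => (hhderiv s hs).continuousAt.continuousWithinAt
    · rw [interior_Ico]
      exact fun s hs => (hhderiv s ⟨hs.1.le, hs.2⟩).differentiableAt.differentiableWithinAt
    · rw [interior_Ico]
      intro s hs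
      rw [(hhderiv s ⟨hs.1.le, hs.2⟩).deriv]
      have : m ≤ g s := hgmono haIoo (hIcosub ⟨hs.1.le, hs.2⟩) hs.1.le
      linarith
  -- lower bound for e on Ico a t₁
  set C := f a + m * (t₁ - a) with hC
  have hbound : ∀ s ∈ Set.Ico a t₁, Real.exp C ≤ e s := by
    intro s hs
    have h1 : h a ≤ h s := hhmono ⟨le_rfl, haIoo.2⟩ hs hs.1
    have h2 : f a + m * (s - a) ≤ f s := by simp only [hh] at h1; linarith
    have h3 : m * (t₁ - a) ≤ m * (s - a) :=
      mul_le_mul_of_nonpos_left (by linarith [hs.2]) hmle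
    have h4 : C ≤ f s := by linarith
    have hes : 0 < e s := hposIco s ⟨(hIcosub hs).1.le, hs.2⟩
    calc Real.exp C ≤ Real.exp (f s) := Real.exp_le_exp.mpr h4
      _ = e s := by rw [hf]; exact Real.exp_log hes
  -- contradiction via limit at t₁
  have ht₁Icc : t₁ ∈ Set.Icc (0:ℝ) T := ⟨le_trans ht₀.1.le ht₁le, ht₁T⟩
  have htend : Filter.Tendsto e (𝓝[Set.Ico a t₁] t₁) (𝓝 (e t₁)) :=
    (hcont t₁ ht₁Icc).mono_left (nhdsWithin_mono _ (fun s hs =>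
      ⟨le_trans ht₀.1.le (hIcosub hs).1.le, le_trans hs.2.le ht₁T⟩))
  haveI : Filter.NeBot (𝓝[Set.Ico a t₁] t₁) :=
    Filter.NeBot.mono (right_nhdsWithin_Ioo_neBot haIoo.2)
      (nhdsWithin_mono _ Set.Ioo_subset_Ico_self)
  have hle : Real.exp C ≤ e t₁ :=
    ge_of_tendsto htend (eventually_mem_nhdsWithin.mono fun s hs => hbound s hs)
  rw [ht₁Z.2] at hle
  exact absurd hle (not_le.mpr (Real.exp_pos C))
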